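/- Let X have mean u, variance σ² ∈ (0,∞), and E|X - u|^{2+δ} < ∞ for some δ ∈ (0,1]. Then, with β₂ and β₃ as before, β₂ + β₃ ≤ 2·n^{-δ/2}·σ^{-(2+δ)}·E|X - u|^{2+δ}. -/

import Mathlib

open MeasureTheory ProbabilityTheory

theorem beta_sum_moment_bound
    {Ω : Type*} [MeasurableSpace Ω] (μ : Measure Ω) [IsProbabilityMeasure μ]
    (X : Ω → ℝ) (u σ : ℝ) (δ : ℝ) (hδ0 : 0 < δ) (hδ1 : δ ≤ 1)
    (n : ℕ) (hn : 1 ≤ n)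
    (hX2 : MemLp X 2 μ)
    (hmean : ∫ ω, X ω ∂μ = u)
    (hvar : variance X μ = σ^2)
    (hσ : 0 < σ)
    (hmom : Integrable (fun ω => |X ω - u| ^ ((2:ℝ) + δ)) μ) :
    (σ^2)⁻¹ * (∫ ω, (if Real.sqrt n * σ ≤ |X ω - u| then |X ω - u|^2 else 0) ∂μ) +
      (Real.sqrt n * σ^3)⁻¹ *
        (∫ ω, (if |X ω - u| ≤ Real.sqrt n * σ then |X ω - u|^3 else 0) ∂μ)
    ≤ 2 * (n : ℝ) ^ (-(δ/2)) * σ ^ (-(2 + δ)) *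
        ∫ ω, |X ω - u| ^ ((2:ℝ) + δ) ∂μ := by
  set c : ℝ := Real.sqrt n * σ with hc
  have hsn : (1:ℝ) ≤ Real.sqrt n := by
    rw [show (1:ℝ) = Real.sqrt 1 by simp]
    exact Real.sqrt_le_sqrt (by exact_mod_cast hn)
  have hsn0 : 0 < Real.sqrt n := lt_of_lt_of_le one_pos hsn
  have hc0 : 0 < c := mul_pos hsn0 hσ
  set I : ℝ := ∫ ω, |X ω - u| ^ ((2:ℝ) + δ) ∂μ with hI
  have hI0 : 0 ≤ I := integral_nonneg fun ω => by positivity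
  -- bound 1
  have hb1 : (∫ ω, (if c ≤ |X ω - u| then |X ω - u|^2 else 0) ∂μ) ≤ c ^ (-δ) * I := by
    rw [hI, ← integral_const_mul]
    apply integral_mono_of_nonneg
    · filter_upwards with ω
      split_ifs <;> positivity
    · exact hmom.const_mul _
    · filter_upwards with ω
      set y := |X ω - u| with hy
      have hy0 : 0 ≤ y := abs_nonneg _
      split_ifs with h
      · have hyp : 0 < y := lt_of_lt_of_le hc0 h
        have h1 : y ^ ((2:ℝ) + δ) = y^2 * y^δ := by
          rw [Real.rpow_add hyp, Real.rpow_two]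
        have h2 : c ^ δ ≤ y ^ δ := Real.rpow_le_rpow hc0.le h hδ0.le
        have h3 : (1:ℝ) ≤ c ^ (-δ) * y ^ δ := by
          rw [Real.rpow_neg hc0.le]
          rw [inv_mul_eq_div, le_div_iff₀ (Real.rpow_pos_of_pos hc0 δ)]
          simpa using h2
        calc y^2 = y^2 * 1 := by ring
        _ ≤ y^2 * (c ^ (-δ) * y ^ δ) := by
            apply mul_le_mul_of_nonneg_left h3 (by positivity)
        _ = c ^ (-δ) * y ^ ((2:ℝ) + δ) := by rw [h1]; ring
      · positivity
  -- bound 2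
  have hb2 : (∫ ω, (if |X ω - u| ≤ c then |X ω - u|^3 else 0) ∂μ) ≤ c ^ (1-δ) * I := by
    rw [hI, ← integral_const_mul]
    apply integral_mono_of_nonneg
    · filter_upwards with ω
      split_ifs <;> positivity
    · exact hmom.const_mul _
    · filter_upwards with ω
      set y := |X ω - u| with hy
      have hy0 : 0 ≤ y := abs_nonneg _
      split_ifs with h
      · rcases eq_or_lt_of_le hy0 with h0 | hyp
        · rw [← h0]
          have : (0:ℝ) ^ ((2:ℝ) + δ) = 0 := Real.zero_rpow (by positivity)
          simp [this]
        · have h1 : y ^ ((2:ℝ) + δ) * y ^ (1 - δ) = y^3 := by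
            rw [← Real.rpow_add hyp]
            norm_num
          have h2 : y ^ (1-δ) ≤ c ^ (1-δ) := Real.rpow_le_rpow hy0 h (by linarith)
          calc y^3 = y ^ ((2:ℝ)+δ) * y ^ (1-δ) := h1.symm
          _ ≤ y ^ ((2:ℝ)+δ) * c ^ (1-δ) := by
              apply mul_le_mul_of_nonneg_left h2 (by positivity)
          _ = c ^ (1-δ) * y ^ ((2:ℝ)+δ) := by ring
      · positivity
  -- coefficient identities
  have hnpos : (0:ℝ) < (n:ℝ) := by exact_mod_cast hn
  have hsq : Real.sqrt n = (n:ℝ) ^ ((1:ℝ)/2) := Real.sqrt_eq_rpow n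
  have hsnd : Real.sqrt n ^ (-δ) = (n:ℝ) ^ (-(δ/2)) := by
    rw [hsq, ← Real.rpow_mul hnpos.le]
    ring_nf
  have hcd : c ^ (-δ) = (n:ℝ) ^ (-(δ/2)) * σ ^ (-δ) := by
    rw [hc, Real.mul_rpow hsn0.le hσ.le, hsnd]
  have hco1 : (σ^2)⁻¹ * c ^ (-δ) = (n:ℝ) ^ (-(δ/2)) * σ ^ (-(2+δ)) := by
    rw [hcd, show (-(2+δ)) = (-2) + (-δ) by ring, Real.rpow_add hσ,
      show ((-2:ℝ)) = ((-2:ℤ):ℝ) by norm_num, Real.rpow_intCast]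
    have : (σ:ℝ) ^ (-2:ℤ) = (σ^2)⁻¹ := by
      rw [zpow_neg, zpow_two, sq]
    rw [this]; ring
  have hco2 : (Real.sqrt n * σ^3)⁻¹ * c ^ (1-δ) = (n:ℝ) ^ (-(δ/2)) * σ ^ (-(2+δ)) := by
    have h1 : c ^ (1-δ) = c * c ^ (-δ) := by
      rw [show (1-δ) = 1 + (-δ) by ring, Real.rpow_add hc0, Real.rpow_one]
    rw [h1, hcd, hc]
    rw [show (-(2+δ)) = (-2) + (-δ) by ring, Real.rpow_add hσ,
      show ((-2:ℝ)) = ((-2:ℤ):ℝ) by norm_num, Real.rpow_intCast]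
    have h2 : (σ:ℝ) ^ (-2:ℤ) = (σ^2)⁻¹ := by rw [zpow_neg, zpow_two, sq]
    rw [h2]
    field_simp
  calc (σ^2)⁻¹ * (∫ ω, (if c ≤ |X ω - u| then |X ω - u|^2 else 0) ∂μ) +
      (Real.sqrt n * σ^3)⁻¹ * (∫ ω, (if |X ω - u| ≤ c then |X ω - u|^3 else 0) ∂μ)
      ≤ (σ^2)⁻¹ * (c ^ (-δ) * I) + (Real.sqrt n * σ^3)⁻¹ * (c ^ (1-δ) * I) := by
        apply add_le_add
        · exact mul_le_mul_of_nonneg_left hb1 (by positivity)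
        · exact mul_le_mul_of_nonneg_left hb2 (by positivity)
    _ = 2 * (n : ℝ) ^ (-(δ/2)) * σ ^ (-(2 + δ)) * I := by
        rw [← mul_assoc, ← mul_assoc, hco1, hco2]; ring
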